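/- (Triangle equality.) Let u, v, w be three distinct vertices of a simple graph G such that {u,v} and {u,w} are edges of G. Then {v,w} is an edge of G[uv], and G[uv][vw] = G[uw]. -/

import Mathlib

set_option linter.unusedSectionVars false

variable {V : Type*} [Fintype V] [DecidableEq V]

/-- Local complementation at a vertex `w`: complement the edges within `N_G(w)`. -/
def SimpleGraph.localComp (G : SimpleGraph V) (w : V) : SimpleGraph V where
  Adj x y := x ≠ y ∧ Xor' (G.Adj x y) (G.Adj x w ∧ G.Adj y w)
  symm := by
    constructor
    intro x y ⟨hne, hx⟩
    refine ⟨hne.symm, ?_⟩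
    have h1 := G.adj_comm x y
    unfold Xor' Xor at hx ⊢
    tauto
  loopless := by constructor; intro x ⟨h, _⟩; exact h rfl

/-- `x ∼_G y` : `x = y` or `{x,y}` is an edge of `G`. -/
def SimpleGraph.nbr (G : SimpleGraph V) (x y : V) : Prop := x = y ∨ G.Adj x y

theorem SimpleGraph.nbr_comm (G : SimpleGraph V) (x y : V) : G.nbr x y ↔ G.nbr y x :=
  or_congr eq_comm (G.adj_comm x y)

private theorem xor_swap_right (a b c : Prop) : Xor' (Xor' a b) c ↔ Xor' (Xor' a c) b := by
  unfold Xor' Xor; tauto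

/-- The pivot `G[uv]` of `G` on an edge `{u,v}`, characterized by
`x ∼_{G[uv]} y ⟺ (x ∼_G y) XOR ((x ∼_G u) ∧ (y ∼_G v)) XOR ((x ∼_G v) ∧ (y ∼_G u))`. -/
def SimpleGraph.pivot (G : SimpleGraph V) (u v : V) : SimpleGraph V where
  Adj x y := x ≠ y ∧
    Xor' (Xor' (G.nbr x y) (G.nbr x u ∧ G.nbr y v)) (G.nbr x v ∧ G.nbr y u)
  symm := by
    constructor
    intro x y ⟨hne, hx⟩
    refine ⟨hne.symm, ?_⟩
    show Xor' (Xor' (G.nbr y x) (G.nbr y u ∧ G.nbr x v)) (G.nbr y v ∧ G.nbr x u)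
    rw [G.nbr_comm y x, and_comm (a := G.nbr y u) (b := G.nbr x v),
      and_comm (a := G.nbr y v) (b := G.nbr x u)]
    exact (xor_swap_right _ _ _).mp hx
  loopless := by constructor; intro x ⟨h, _⟩; exact h rfl

/-- Determinant over GF(2) of the adjacency matrix of the subgraph of `G` induced by `S`. -/
noncomputable def gdet (G : SimpleGraph V) (S : Finset V) : ZMod 2 := by
  classical
  exact Matrix.det (Matrix.of fun i j : S => if G.Adj i j then (1 : ZMod 2) else 0)

/-- Apply a sequence of pivots (left to right). -/
def applyPivots (G : SimpleGraph V) : List (V × V) → SimpleGraph V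
  | [] => G
  | p :: φ => applyPivots (G.pivot p.1 p.2) φ

/-- A sequence of pivots is applicable when each pair is an edge of the graph
obtained by applying all preceding pivots. -/
def PivotsApplicable (G : SimpleGraph V) : List (V × V) → Prop
  | [] => True
  | p :: φ => G.Adj p.1 p.2 ∧ PivotsApplicable (G.pivot p.1 p.2) φ

/-- The support of a sequence of pivots: vertices occurring an odd number of times. -/
def pivotSupport (φ : List (V × V)) : Finset V :=
  Finset.univ.filter fun x => Odd ((φ.flatMap fun p => [p.1, p.2]).count x)

/-- A sequence of pivots is reduced if its pivot vertices are pairwise distinct. -/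
def ReducedSeq (φ : List (V × V)) : Prop := (φ.flatMap fun p => [p.1, p.2]).Nodup

/-- The number of perfect matchings of the subgraph of `G` induced by `S`:
sets of edges of `G` inside `S` such that every vertex of `S` lies in exactly one of them. -/
noncomputable def pmCount (G : SimpleGraph V) (S : Finset V) : ℕ := by
  classical
  exact (Finset.univ.filter fun P : Finset (Sym2 V) =>
    (∀ e ∈ P, e ∈ G.edgeSet ∧ ∀ v ∈ e, v ∈ S) ∧
    ∀ v ∈ S, ∃! e, e ∈ P ∧ v ∈ e).card


/-- Triangle equality: for distinct `u, v, w` with `{u,v}, {u,w} ∈ E(G)`,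
`{v,w}` is an edge of `G[uv]` and `G[uv][vw] = G[uw]`. -/
private theorem xsimp0 {a b c : Prop} (h : a) : Xor' (Xor' a (b ∧ c)) (c ∧ b) := by
  unfold Xor' Xor; tauto

private theorem xsimp3 {q vu wv vv wu : Prop} (h1 : vu) (h2 : vv) (h3 : wu) (hc : q ↔ wv) :
    Xor' (Xor' q (vu ∧ wv)) (vv ∧ wu) := by unfold Xor' Xor; tauto

private theorem orne {a F : Prop} (h : ¬ a) : (a ∨ (¬a ∧ F)) ↔ F := by tauto

private theorem pivot_nbr (G : SimpleGraph V) (u v x y : V) :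
    (G.pivot u v).nbr x y ↔
      Xor' (Xor' (G.nbr x y) (G.nbr x u ∧ G.nbr y v)) (G.nbr x v ∧ G.nbr y u) := by
  by_cases h : x = y
  · subst h
    have hx : (G.pivot u v).nbr x x := Or.inl rfl
    exact iff_of_true hx (xsimp0 (Or.inl rfl))
  · exact orne h

private theorem xsimp1 {c b vv vu : Prop} (h1 : vv) (h2 : vu) :
    Xor' (Xor' c (b ∧ vv)) (c ∧ vu) ↔ b := by unfold Xor' Xor; tauto

private theorem xsimp2 {g e p f wu : Prop} (h : wu) :
    Xor' (Xor' g (e ∧ p)) (f ∧ wu) ↔ Xor' (Xor' g (e ∧ p)) f := by unfold Xor' Xor; tauto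

set_option maxHeartbeats 1000000 in
private theorem key (a b c d e f g p : Prop) :
    Xor' (Xor' (Xor' (Xor' a (b ∧ f)) (c ∧ e)) (b ∧ Xor' (Xor' g (e ∧ p)) f))
      (Xor' (Xor' d (b ∧ p)) c ∧ e) ↔ Xor' (Xor' a (b ∧ g)) (d ∧ e) := by
  unfold Xor'
  rcases Classical.em a with ha|ha <;> rcases Classical.em b with hb|hb <;>
  rcases Classical.em c with hc|hc <;> rcases Classical.em d with hd|hd <;>
  rcases Classical.em e with he|he <;> rcases Classical.em f with hf|hf <;>
  rcases Classical.em g with hg|hg <;> rcases Classical.em p with hp|hp <;>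
  simp [ha, hb, hc, hd, he, hf, hg, hp]

/-- Triangle equality: for distinct `u, v, w` with `{u,v}, {u,w} ∈ E(G)`,
`{v,w}` is an edge of `G[uv]` and `G[uv][vw] = G[uw]`. -/
theorem pivot_triangle (G : SimpleGraph V) (u v w : V)
    (huv : u ≠ v) (huw : u ≠ w) (hvw : v ≠ w)
    (h1 : G.Adj u v) (h2 : G.Adj u w) :
    (G.pivot u v).Adj v w ∧ (G.pivot u v).pivot v w = G.pivot u w := by
  have nvu : G.nbr v u := Or.inr h1.symm
  have nwu : G.nbr w u := Or.inr h2.symm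
  have nvv : G.nbr v v := Or.inl rfl
  constructor
  · refine ⟨hvw, ?_⟩
    exact xsimp3 nvu nvv nwu (G.nbr_comm v w)
  · ext x y
    show (x ≠ y ∧ Xor' (Xor' ((G.pivot u v).nbr x y)
          ((G.pivot u v).nbr x v ∧ (G.pivot u v).nbr y w))
          ((G.pivot u v).nbr x w ∧ (G.pivot u v).nbr y v)) ↔
        (x ≠ y ∧ Xor' (Xor' (G.nbr x y) (G.nbr x u ∧ G.nbr y w)) (G.nbr x w ∧ G.nbr y u))
    apply and_congr_right
    intro _
    have e1 := pivot_nbr G u v x y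
    have e2 : (G.pivot u v).nbr x v ↔ G.nbr x u :=
      (pivot_nbr G u v x v).trans (xsimp1 nvv nvu)
    have e3 : (G.pivot u v).nbr y w ↔
        Xor' (Xor' (G.nbr y w) (G.nbr y u ∧ G.nbr w v)) (G.nbr y v) :=
      (pivot_nbr G u v y w).trans (xsimp2 nwu)
    have e4 : (G.pivot u v).nbr x w ↔
        Xor' (Xor' (G.nbr x w) (G.nbr x u ∧ G.nbr w v)) (G.nbr x v) :=
      (pivot_nbr G u v x w).trans (xsimp2 nwu)
    have e5 : (G.pivot u v).nbr y v ↔ G.nbr y u :=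
      (pivot_nbr G u v y v).trans (xsimp1 nvv nvu)
    rw [e1, e2, e3, e4, e5]
    exact key (G.nbr x y) (G.nbr x u) (G.nbr x v) (G.nbr x w)
      (G.nbr y u) (G.nbr y v) (G.nbr y w) (G.nbr w v)
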